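/- arXiv:1812.08109 — 4 statements merged into one kernel-verified Lean document; each statement's English description precedes it below -/
import Mathlib

section
/- If f: V × W → ℝ is partially κ-strongly convex with respect to its first argument (where V ⊆ ℝⁿ and W ⊆ ℝ are nonempty convex sets), i.e. f(λ(x₁,y₁)+(1-λ)(x₂,y₂)) ≤ λf(x₁,y₁)+(1-λ)f(x₂,y₂) - (κ/2)λ(1-λ)‖x₁-x₂‖² for all (xᵢ,yᵢ) ∈ V×W and λ ∈ (0,1), and g: V → W is any map, then the function x ↦ min over η ∈ W of (η + (1/α) f(x,η)) is (κ/α)-strongly convex on V whenever the minimum is attained at η = g(x) for each x ∈ V and α > 0. -/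
open Set

/-- partial strong convexity of `f` wrt its first argument implies
(κ/α)-strong convexity of `x ↦ min_{η ∈ W} (η + (1/α) f(x,η))`, the minimum being
attained at `η = g x`. -/
theorem stmt_0 (n : ℕ) (V : Set (EuclideanSpace ℝ (Fin n))) (W : Set ℝ)
    (hVne : V.Nonempty) (hWne : W.Nonempty) (hVconv : Convex ℝ V) (hWconv : Convex ℝ W)
    (α κ : ℝ) (hα : α ∈ Set.Ioc (0:ℝ) 1) (hκ : 0 < κ)
    (f : EuclideanSpace ℝ (Fin n) → ℝ → ℝ) (g : EuclideanSpace ℝ (Fin n) → ℝ)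
    (hgW : ∀ x ∈ V, g x ∈ W)
    (hpsc : ∀ x₁ ∈ V, ∀ x₂ ∈ V, ∀ y₁ ∈ W, ∀ y₂ ∈ W, ∀ t ∈ Set.Ioo (0:ℝ) 1,
      f (t • x₁ + (1 - t) • x₂) (t * y₁ + (1 - t) * y₂)
        ≤ t * f x₁ y₁ + (1 - t) * f x₂ y₂ - κ / 2 * t * (1 - t) * ‖x₁ - x₂‖ ^ 2)
    (hmin : ∀ x ∈ V, ∀ η ∈ W, g x + (1 / α) * f x (g x) ≤ η + (1 / α) * f x η) :
    ∀ x₁ ∈ V, ∀ x₂ ∈ V, ∀ t ∈ Set.Ioo (0:ℝ) 1,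
      g (t • x₁ + (1 - t) • x₂) + (1 / α) * f (t • x₁ + (1 - t) • x₂) (g (t • x₁ + (1 - t) • x₂))
        ≤ t * (g x₁ + (1 / α) * f x₁ (g x₁)) + (1 - t) * (g x₂ + (1 / α) * f x₂ (g x₂))
          - (κ / α) / 2 * t * (1 - t) * ‖x₁ - x₂‖ ^ 2 := by
  intro x₁ hx₁ x₂ hx₂ t ht
  obtain ⟨ht0, ht1⟩ := ht
  have hxV : t • x₁ + (1 - t) • x₂ ∈ V :=
    hVconv hx₁ hx₂ ht0.le (by linarith) (by ring)
  have hηW : t * g x₁ + (1 - t) * g x₂ ∈ W := by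
    have := hWconv (hgW x₁ hx₁) (hgW x₂ hx₂) ht0.le (by linarith : (0:ℝ) ≤ 1 - t) (by ring)
    simpa [smul_eq_mul] using this
  have h1 := hmin _ hxV _ hηW
  have h2 := hpsc x₁ hx₁ x₂ hx₂ (g x₁) (hgW x₁ hx₁) (g x₂) (hgW x₂ hx₂) t ⟨ht0, ht1⟩
  have hαpos := hα.1
  have hinv : 0 < 1 / α := by positivity
  have h3 : (1 / α) * f (t • x₁ + (1 - t) • x₂) (t * g x₁ + (1 - t) * g x₂)
      ≤ (1 / α) * (t * f x₁ (g x₁) + (1 - t) * f x₂ (g x₂) - κ / 2 * t * (1 - t) * ‖x₁ - x₂‖ ^ 2) :=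
    mul_le_mul_of_nonneg_left h2 hinv.le
  have h4 : (1/α) * (t * f x₁ (g x₁) + (1 - t) * f x₂ (g x₂) - κ / 2 * t * (1 - t) * ‖x₁ - x₂‖ ^ 2)
      = t * ((1/α) * f x₁ (g x₁)) + (1 - t) * ((1/α) * f x₂ (g x₂))
        - (κ/α)/2 * t * (1 - t) * ‖x₁ - x₂‖ ^ 2 := by
    field_simp
  linarith [h1, h3, h4]
end

section
/- Let φ(t) = max{0, αt} with α, ρ > 0, μ uniform on (-ρ, 1+ρ), and Q(x,η) = ∫ max{0, φ(z-x) - η} dμ(z). Then for every η with 0 < η < αρ, the function x ↦ Q(x,η) is strongly convex on (0,1) with modulus α/(1+2ρ). -/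
open MeasureTheory
open intervalIntegral in
lemma my_integral_id (a b : ℝ) : ∫ x in a..b, x = (b ^ 2 - a ^ 2) / 2 := integral_id

lemma stmt4_key (α ρ η x : ℝ) (hα : 0 < α) (hρ : 0 < ρ) (hη : 0 < η)
    (hηρ : η < α * ρ) (hx0 : 0 < x) (hx1 : x < 1) :
    (∫ z in (-ρ)..(1 + ρ), max 0 (max 0 (α * (z - x)) - η) * (1 / (1 + 2 * ρ)))
      = α / (2 * (1 + 2 * ρ)) * (1 + ρ - (x + η / α)) ^ 2 := by
  set m : ℝ := x + η / α with hm
  have hηα : η / α < ρ := (div_lt_iff₀ hα).2 (by linarith [hηρ])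
  have hηα0 : 0 < η / α := div_pos hη hα
  have hm1 : -ρ ≤ m := by simp [hm]; nlinarith
  have hm2 : m ≤ 1 + ρ := by simp [hm]; nlinarith
  have hcont : Continuous fun z : ℝ => max 0 (max 0 (α * (z - x)) - η) * (1 / (1 + 2 * ρ)) := by
    fun_prop
  rw [← intervalIntegral.integral_add_adjacent_intervals
      (hcont.intervalIntegrable (-ρ) m) (hcont.intervalIntegrable m (1 + ρ))]
  have h1 : (∫ z in (-ρ)..m, max 0 (max 0 (α * (z - x)) - η) * (1 / (1 + 2 * ρ))) = 0 := by
    rw [intervalIntegral.integral_congr (g := fun _ => 0)]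
    · simp
    · intro z hz
      rw [Set.uIcc_of_le hm1] at hz
      have hzm : z ≤ m := hz.2
      have h1 : max 0 (α * (z - x)) ≤ η := by
        rcases le_or_gt (α * (z - x)) 0 with h | h
        · simp [max_eq_left h]; linarith
        · rw [max_eq_right h.le]
          have : z - x ≤ η / α := by simp [hm] at hzm ⊢; linarith
          calc α * (z - x) ≤ α * (η / α) := by nlinarith
            _ = η := by field_simp
      simp [max_eq_left (by linarith : max 0 (α * (z - x)) - η ≤ 0)]
  have h2 : (∫ z in m..(1 + ρ), max 0 (max 0 (α * (z - x)) - η) * (1 / (1 + 2 * ρ)))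
      = ∫ z in m..(1 + ρ), (z - m) * (α / (1 + 2 * ρ)) := by
    apply intervalIntegral.integral_congr
    intro z hz
    rw [Set.uIcc_of_le hm2] at hz
    dsimp only
    have hzm : m ≤ z := hz.1
    have hxz : 0 ≤ α * (z - x) := by
      have : x ≤ z := by simp [hm] at hzm; linarith
      nlinarith
    rw [max_eq_right hxz]
    have hαm : α * (z - x) - η = α * (z - m) := by
      simp [hm]; field_simp; ring
    have hnn : (0:ℝ) ≤ α * (z - x) - η := by rw [hαm]; nlinarith
    rw [max_eq_right hnn, hαm]
    ring
  rw [h1, h2, intervalIntegral.integral_mul_const,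
    intervalIntegral.integral_comp_sub_right (fun z => z) m, my_integral_id]
  have h2ρ : (0:ℝ) < 1 + 2 * ρ := by linarith
  field_simp
  ring

/-- for `0 < η < αρ`, the expected excess `x ↦ Q(x,η)` for
`φ(t) = max{0,αt}` and `μ` uniform on `(-ρ, 1+ρ)` is strongly convex on `(0,1)`
with modulus `α/(1+2ρ)`. -/
theorem stmt_4 (α ρ : ℝ) (hα : 0 < α) (hρ : 0 < ρ)
    (Q : ℝ → ℝ → ℝ)
    (hQ : ∀ x η, Q x η
      = ∫ z in (-ρ)..(1 + ρ), max 0 (max 0 (α * (z - x)) - η) * (1 / (1 + 2 * ρ)))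
    (η : ℝ) (hη : 0 < η) (hηρ : η < α * ρ) :
    ∀ x ∈ Set.Ioo (0:ℝ) 1, ∀ y ∈ Set.Ioo (0:ℝ) 1, ∀ t ∈ Set.Ioo (0:ℝ) 1,
      Q (t * x + (1 - t) * y) η
        ≤ t * Q x η + (1 - t) * Q y η
          - (α / (1 + 2 * ρ)) / 2 * t * (1 - t) * (x - y) ^ 2 := by
  intro x hx y hy t ht
  obtain ⟨hx0, hx1⟩ := hx
  obtain ⟨hy0, hy1⟩ := hy
  obtain ⟨ht0, ht1⟩ := ht
  have hmid0 : 0 < t * x + (1 - t) * y := by nlinarith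
  have hmid1 : t * x + (1 - t) * y < 1 := by nlinarith
  rw [hQ, hQ, hQ,
    stmt4_key α ρ η x hα hρ hη hηρ hx0 hx1,
    stmt4_key α ρ η y hα hρ hη hηρ hy0 hy1,
    stmt4_key α ρ η _ hα hρ hη hηρ hmid0 hmid1]
  apply le_of_eq
  have h2ρ : (0:ℝ) < 1 + 2 * ρ := by linarith
  field_simp
  ring
end

section
/- Let φ(t) = max{0,t}, μ uniform on (0,1), α ∈ (0,1), and define Q_CVaR(x) = min over η ∈ ℝ of (η + (1/α)∫₀¹ max{0, max{0,z-x}-η} dz). Then for x ∈ (0, 1-α), the minimum is attained at η* = 1 - α - x and Q_CVaR(x) = -x + (2-α)/2; in particular Q_CVaR is affine on (0, 1-α) and hence not strongly convex on any open subinterval. -/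
open MeasureTheory

section Aux
open intervalIntegral

-- value at η* for x ∈ (0, 1-α), α ∈ (0,1)
theorem val_lemma (α x : ℝ) (h0 : 0 < α) (h1 : α < 1) (hx0 : 0 < x) (hx1 : x < 1 - α) :
    (∫ z in (0:ℝ)..1, max 0 (max 0 (z - x) - (1 - α - x))) = α ^ 2 / 2 := by
  have hc0 : (0:ℝ) ≤ 1 - α := by linarith
  have hc1 : (1:ℝ) - α ≤ 1 := by linarith
  have hcont : Continuous (fun z : ℝ => max 0 (max 0 (z - x) - (1 - α - x))) := by fun_prop
  have hsplit := integral_add_adjacent_intervals (μ := volume) (a := (0:ℝ)) (b := 1 - α) (c := 1)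
    (hcont.intervalIntegrable _ _) (hcont.intervalIntegrable _ _)
  rw [← hsplit]
  have h1' : (∫ z in (0:ℝ)..(1 - α), max 0 (max 0 (z - x) - (1 - α - x))) = 0 := by
    rw [integral_congr (g := fun _ => (0:ℝ))]
    · simp
    · intro z hz
      rw [Set.uIcc_of_le hc0] at hz
      have h' : max 0 (z - x) - (1 - α - x) ≤ 0 := by
        have : max 0 (z - x) ≤ 1 - α - x := max_le (by linarith) (by have := hz.2; linarith)
        linarith
      simpa using max_eq_left h'
  have h2' : (∫ z in (1 - α)..(1:ℝ), max 0 (max 0 (z - x) - (1 - α - x)))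
      = ∫ z in (1 - α)..(1:ℝ), (z - (1 - α)) := by
    apply integral_congr
    intro z hz
    rw [Set.uIcc_of_le hc1] at hz
    have hz1 : 1 - α ≤ z := hz.1
    show max 0 (max 0 (z - x) - (1 - α - x)) = z - (1 - α)
    rw [max_eq_right (by linarith : (0:ℝ) ≤ z - x)]
    rw [max_eq_right (by linarith : (0:ℝ) ≤ z - x - (1 - α - x))]
    ring
  rw [h1', h2', zero_add]
  have : (∫ z in (1 - α)..(1:ℝ), (z - (1 - α)))
      = (∫ z in (1 - α)..(1:ℝ), z) - (∫ z in (1 - α)..(1:ℝ), (1 - α : ℝ)) :=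
    integral_sub (by apply Continuous.intervalIntegrable; fun_prop)
      (by apply Continuous.intervalIntegrable; fun_prop)
  rw [this, integral_id, intervalIntegral.integral_const]
  simp; ring

-- lower bound
theorem lb_lemma (α x η : ℝ) (h0 : 0 < α) (h1 : α < 1) (hx0 : 0 < x) (hx1 : x < 1 - α) :
    α * (1 - α / 2 - x - η) ≤ ∫ z in (0:ℝ)..1, max 0 (max 0 (z - x) - η) := by
  have hc0 : (0:ℝ) ≤ 1 - α := by linarith
  have hc1 : (1:ℝ) - α ≤ 1 := by linarith
  have hcont : Continuous (fun z : ℝ => max 0 (max 0 (z - x) - η)) := by fun_prop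
  have hsplit := integral_add_adjacent_intervals (μ := volume) (a := (0:ℝ)) (b := 1 - α) (c := 1)
    (hcont.intervalIntegrable _ _) (hcont.intervalIntegrable _ _)
  rw [← hsplit]
  have hA : (0:ℝ) ≤ ∫ z in (0:ℝ)..(1 - α), max 0 (max 0 (z - x) - η) := by
    apply intervalIntegral.integral_nonneg hc0
    intro z _; exact le_max_left _ _
  have hB : (∫ z in (1 - α)..(1:ℝ), (z - x - η))
      ≤ ∫ z in (1 - α)..(1:ℝ), max 0 (max 0 (z - x) - η) := by
    apply integral_mono_on hc1
    · apply Continuous.intervalIntegrable; fun_prop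
    · exact hcont.intervalIntegrable _ _
    · intro z hz
      calc z - x - η ≤ max 0 (z - x) - η := by
            have := le_max_right (0:ℝ) (z - x); linarith
        _ ≤ max 0 (max 0 (z - x) - η) := le_max_right _ _
  have hval : (∫ z in (1 - α)..(1:ℝ), (z - x - η)) = α * (1 - α / 2 - x - η) := by
    have : (∫ z in (1 - α)..(1:ℝ), (z - x - η))
        = (∫ z in (1 - α)..(1:ℝ), z) - (∫ z in (1 - α)..(1:ℝ), (x + η : ℝ)) := by
      rw [← intervalIntegral.integral_sub]
      · congr 1; ext z; ring
      all_goals apply Continuous.intervalIntegrable; fun_prop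
    rw [this, integral_id, intervalIntegral.integral_const]
    simp; ring
  linarith

end Aux

/-- for `φ(t) = max{0,t}`, `μ` uniform on `(0,1)` and `α ∈ (0,1)`, the CVaR
minimisation is solved by `η* = 1 - α - x` with optimal value `-x + (2-α)/2` on
`(0, 1-α)`; in particular the CVaR function is affine there and not strongly convex on
any open subinterval. -/
theorem stmt_7 (α : ℝ) (hα : α ∈ Set.Ioo (0:ℝ) 1)
    (EE : ℝ → ℝ → ℝ)
    (hEE : ∀ x η, EE x η = ∫ z in (0:ℝ)..1, max 0 (max 0 (z - x) - η))
    (QC : ℝ → ℝ)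
    (hQC : ∀ x, QC x = (1 - α - x) + (1 / α) * EE x (1 - α - x)) :
    (∀ x ∈ Set.Ioo (0:ℝ) (1 - α),
        (∀ η : ℝ, QC x ≤ η + (1 / α) * EE x η) ∧ QC x = -x + (2 - α) / 2)
      ∧ ∀ κ : ℝ, 0 < κ → ∀ a b : ℝ, 0 < a → a < b → b < 1 - α →
          ¬ (∀ x ∈ Set.Ioo a b, ∀ y ∈ Set.Ioo a b, ∀ t ∈ Set.Ioo (0:ℝ) 1,
              QC (t * x + (1 - t) * y)
                ≤ t * QC x + (1 - t) * QC y - κ / 2 * t * (1 - t) * (x - y) ^ 2) := by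
  obtain ⟨h0, h1⟩ := hα
  have key : ∀ x ∈ Set.Ioo (0:ℝ) (1 - α),
      (∀ η : ℝ, QC x ≤ η + (1 / α) * EE x η) ∧ QC x = -x + (2 - α) / 2 := by
    intro x hx
    obtain ⟨hx0, hx1⟩ := hx
    have hval : EE x (1 - α - x) = α ^ 2 / 2 := by
      rw [hEE]; exact val_lemma α x h0 h1 hx0 hx1
    have hQx : QC x = -x + (2 - α) / 2 := by
      rw [hQC, hval]; field_simp; ring
    refine ⟨fun η => ?_, hQx⟩
    have hlb := lb_lemma α x η h0 h1 hx0 hx1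
    rw [← hEE] at hlb
    have h1α : 0 < 1 / α := by positivity
    have : (1 / α) * (α * (1 - α / 2 - x - η)) ≤ (1 / α) * EE x η :=
      mul_le_mul_of_nonneg_left hlb (le_of_lt h1α)
    have heq : (1 / α) * (α * (1 - α / 2 - x - η)) = 1 - α / 2 - x - η := by
      field_simp
    rw [hQx]; rw [heq] at this; linarith
  refine ⟨key, ?_⟩
  intro κ hκ a b ha hab hb1 hcon
  set m : ℝ := (a + b) / 2 with hm
  set d : ℝ := (b - a) / 4 with hd
  have hd0 : 0 < d := by simp [hd]; linarith
  have hxmem : m - d ∈ Set.Ioo a b := by constructor <;> simp [hm, hd] <;> linarith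
  have hymem : m + d ∈ Set.Ioo a b := by constructor <;> simp [hm, hd] <;> linarith
  have htmem : (1/2 : ℝ) ∈ Set.Ioo (0:ℝ) 1 := by norm_num
  have hsub : ∀ u ∈ Set.Ioo a b, u ∈ Set.Ioo (0:ℝ) (1 - α) := by
    intro u hu; exact ⟨by linarith [hu.1], by linarith [hu.2]⟩
  have h := hcon (m - d) hxmem (m + d) hymem (1/2) htmem
  have hmid : (1/2 : ℝ) * (m - d) + (1 - 1/2) * (m + d) = m := by ring
  rw [hmid] at h
  have hmmem : m ∈ Set.Ioo (0:ℝ) (1 - α) := by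
    constructor <;> simp [hm] <;> linarith
  have e1 := (key m hmmem).2
  have e2 := (key (m - d) (hsub _ hxmem)).2
  have e3 := (key (m + d) (hsub _ hymem)).2
  rw [e1, e2, e3] at h
  nlinarith [sq_nonneg d, mul_pos hκ (mul_pos hd0 hd0)]
end

section
/- Let K ⊆ ℝˢ be a pointed full-dimensional polyhedral cone written as K = Kᵢ = {z : (dᵢ-dⱼ)ᵀz ≥ 0 for all j ∈ I} where {dⱼ : j ∈ I} are the distinct extreme points of a nonempty polyhedron {v : Wᵀv ≤ q}. Then there exists α > 0 such that for every u ∈ K, max_{j∈I} (dᵢ - dⱼ)ᵀu ≥ α‖u‖. -/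
/-- for a pointed, full-dimensional linearity cone
`Kᵢ = {z : ⟨dᵢ - dⱼ, z⟩ ≥ 0 ∀ j}` of the value function, where `{dⱼ}` are the distinct
extreme points of the bounded nonempty polyhedron `{v : Wᵀv ≤ q}`, there is `α > 0`
with `max_j ⟨dᵢ - dⱼ, u⟩ ≥ α‖u‖` for every `u ∈ Kᵢ`. -/
theorem stmt_19 (s m : ℕ) (W : Matrix (Fin s) (Fin m) ℝ) (q : Fin m → ℝ)
    (I : Type*) [Fintype I] [Nonempty I]
    (dv : I → EuclideanSpace ℝ (Fin s))
    (P : Set (EuclideanSpace ℝ (Fin s)))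
    (hP : P = {v : EuclideanSpace ℝ (Fin s) | ∀ k : Fin m, (∑ l, W l k * v l) ≤ q k})
    (hPne : P.Nonempty) (hPbdd : Bornology.IsBounded P)
    (hext : Set.extremePoints ℝ P = Set.range dv)
    (hinj : Function.Injective dv)
    (i : I)
    (K : Set (EuclideanSpace ℝ (Fin s)))
    (hK : K = {z : EuclideanSpace ℝ (Fin s) | ∀ j : I, (0:ℝ) ≤ inner ℝ (dv i - dv j) z})
    (hpointed : ∀ z ∈ K, -z ∈ K → z = 0)
    (hfulldim : (interior K).Nonempty) :
    ∃ α : ℝ, 0 < α ∧ ∀ u ∈ K,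
      α * ‖u‖ ≤ Finset.univ.sup' Finset.univ_nonempty
        (fun j => (inner ℝ (dv i - dv j) u : ℝ)) := by
  classical
  set f : EuclideanSpace ℝ (Fin s) → ℝ := fun u => Finset.univ.sup' Finset.univ_nonempty
      (fun j => (inner ℝ (dv i - dv j) u : ℝ)) with hf
  have hfcont : Continuous f := by
    apply Continuous.finset_sup'_apply Finset.univ_nonempty
    intro j _
    exact continuous_const.inner continuous_id
  have hKclosed : IsClosed K := by
    rw [hK]
    have heq : {z : EuclideanSpace ℝ (Fin s) | ∀ j : I, (0:ℝ) ≤ inner ℝ (dv i - dv j) z} =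
        ⋂ j : I, (fun z : EuclideanSpace ℝ (Fin s) => (inner ℝ (dv i - dv j) z : ℝ)) ⁻¹' Set.Ici 0 := by
      ext z; simp [Set.mem_iInter]
    rw [heq]
    exact isClosed_iInter fun j =>
      IsClosed.preimage (continuous_const.inner continuous_id) isClosed_Ici
  have hfzero : f 0 = 0 := by
    rw [hf]
    simp only
    have h1 : ∀ j : I, (inner ℝ (dv i - dv j) (0:EuclideanSpace ℝ (Fin s)) : ℝ) = 0 := by
      intro j; exact inner_zero_right _
    rw [Finset.sup'_congr Finset.univ_nonempty rfl (fun j _ => h1 j)]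
    simp
  have hpos : ∀ u ∈ K, u ≠ 0 → 0 < f u := by
    intro u hu hne
    have hnn : ∀ j : I, (0:ℝ) ≤ inner ℝ (dv i - dv j) u := by
      rw [hK] at hu; exact hu
    have hle : (0:ℝ) ≤ f u := by
      have h2 := Finset.le_sup' (fun j => (inner ℝ (dv i - dv j) u : ℝ))
        (Finset.mem_univ i)
      exact le_trans (hnn i) h2
    rcases lt_or_eq_of_le hle with h | h
    · exact h
    · exfalso
      apply hne
      apply hpointed u hu
      rw [hK]
      intro j
      have hj : (inner ℝ (dv i - dv j) u : ℝ) ≤ 0 := by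
        have h3 := Finset.le_sup' (fun j => (inner ℝ (dv i - dv j) u : ℝ))
          (Finset.mem_univ j)
        exact h3.trans (le_of_eq h.symm)
      have h4 : (inner ℝ (dv i - dv j) u : ℝ) = 0 := le_antisymm hj (hnn j)
      rw [inner_neg_right, h4, neg_zero]
  have hscale : ∀ (c : ℝ), 0 ≤ c → ∀ u ∈ K, c • u ∈ K := by
    intro c hc u hu
    rw [hK] at hu ⊢
    intro j
    rw [real_inner_smul_right]
    exact mul_nonneg hc (hu j)
  set S := K ∩ Metric.sphere (0:EuclideanSpace ℝ (Fin s)) 1 with hS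
  have hScompact : IsCompact S :=
    (isCompact_sphere (0:EuclideanSpace ℝ (Fin s)) 1).inter_left hKclosed
  by_cases hSne : S.Nonempty
  · obtain ⟨x, hxS, hmin⟩ := hScompact.exists_isMinOn hSne hfcont.continuousOn
    have hxK : x ∈ K := hxS.1
    have hxne : x ≠ 0 := by
      intro h
      have h5 := hxS.2
      rw [h] at h5
      simp at h5
    refine ⟨f x, hpos x hxK hxne, ?_⟩
    intro u hu
    by_cases hu0 : u = 0
    · subst hu0
      simp only [norm_zero, mul_zero]
      rw [show Finset.univ.sup' Finset.univ_nonempty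
        (fun j => (inner ℝ (dv i - dv j) (0:EuclideanSpace ℝ (Fin s)) : ℝ)) = f 0 from rfl, hfzero]
    · have hnorm : (0:ℝ) < ‖u‖ := norm_pos_iff.mpr hu0
      set v : EuclideanSpace ℝ (Fin s) := ‖u‖⁻¹ • u with hv
      have hvS : v ∈ S := by
        constructor
        · exact hscale _ (inv_nonneg.mpr hnorm.le) u hu
        · simp only [hv, mem_sphere_iff_norm, sub_zero, norm_smul, norm_inv, norm_norm]
          exact inv_mul_cancel₀ hnorm.ne'
      have hαv : f x ≤ f v := hmin hvS
      obtain ⟨j, _, hj⟩ := Finset.exists_mem_eq_sup' (Finset.univ_nonempty (α := I))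
        (fun j => (inner ℝ (dv i - dv j) v : ℝ))
      have hfv : f v = ‖u‖⁻¹ * inner ℝ (dv i - dv j) u := by
        rw [hf]
        simp only
        rw [hj, hv, real_inner_smul_right]
      have h1 : f x * ‖u‖ ≤ inner ℝ (dv i - dv j) u := by
        rw [hfv] at hαv
        have h2 : f x * ‖u‖ ≤ (‖u‖⁻¹ * inner ℝ (dv i - dv j) u) * ‖u‖ :=
          mul_le_mul_of_nonneg_right hαv hnorm.le
        calc f x * ‖u‖ ≤ (‖u‖⁻¹ * inner ℝ (dv i - dv j) u) * ‖u‖ := h2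
          _ = inner ℝ (dv i - dv j) u := by
            field_simp
      calc f x * ‖u‖ ≤ inner ℝ (dv i - dv j) u := h1
        _ ≤ _ := Finset.le_sup' (fun j => (inner ℝ (dv i - dv j) u : ℝ)) (Finset.mem_univ j)
  · refine ⟨1, one_pos, ?_⟩
    intro u hu
    have hu0 : u = 0 := by
      by_contra h
      have hnorm : (0:ℝ) < ‖u‖ := norm_pos_iff.mpr h
      apply hSne
      refine ⟨‖u‖⁻¹ • u, hscale _ (inv_nonneg.mpr hnorm.le) u hu, ?_⟩
      simp only [mem_sphere_iff_norm, sub_zero, norm_smul, norm_inv, norm_norm]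
      exact inv_mul_cancel₀ hnorm.ne'
    subst hu0
    simp only [norm_zero, mul_zero]
    rw [show Finset.univ.sup' Finset.univ_nonempty
      (fun j => (inner ℝ (dv i - dv j) (0:EuclideanSpace ℝ (Fin s)) : ℝ)) = f 0 from rfl, hfzero]
end
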